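/- Let ω > 1 and κ > 0, and let ρ : ℝ → ℝ be twice differentiable with ρ''(σ) = −κ²(ω² − 1) sinh ρ(σ) cosh ρ(σ) and ρ'(σ)² = κ²(cosh²ρ(σ) − ω² sinh²ρ(σ)) for all σ. Define Y : ℝ² → ℝ^8 by Y(τ,σ) = 2(cosh ρ(σ) cos κτ, sinh ρ(σ) cos κωτ, sinh ρ(σ) sin κωτ, 0, 0, 0, 0, cosh ρ(σ) sin κτ). Then Y together with Λ(τ,σ) := −2ρ'(σ)² satisfies the conformal-gauge string system on AdS₇ of radius ℓ = 2 (with p = 5); in particular the induced multiplier is Λ̃ = η(∂σY,∂σY) = 4ρ'². -/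

import Mathlib

noncomputable section

open Real

/-- Sign of the AdS embedding metric η = diag(−1, 1, …, 1, −1) on ℝ^{p+3}. -/
def etaSign (p : ℕ) (μ : Fin (p + 3)) : ℝ :=
  if μ.val = 0 ∨ μ.val = p + 2 then -1 else 1

/-- The AdS embedding bilinear form η(u,v) = −u₀v₀ + u₁v₁ + ⋯ + u_{p+1}v_{p+1} − u_{p+2}v_{p+2}. -/
def etaForm (p : ℕ) (u v : Fin (p + 3) → ℝ) : ℝ :=
  ∑ μ, etaSign p μ * u μ * v μ

/-- The conformal-gauge string system on AdS_{p+2} of radius ℓ. -/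
def IsConformalString (p : ℕ) (ℓ : ℝ) (Y : ℝ → ℝ → Fin (p + 3) → ℝ)
    (Λ : ℝ → ℝ → ℝ) : Prop :=
  (∀ τ σ μ,
    deriv (fun t => deriv (fun t' => Y t' σ μ) t) τ
      - deriv (fun s => deriv (fun s' => Y τ s' μ) s) σ = Λ τ σ * Y τ σ μ) ∧
  (∀ τ σ, etaForm p (Y τ σ) (Y τ σ) = -ℓ ^ 2) ∧
  (∀ τ σ, etaForm p (fun μ => deriv (fun t => Y t σ μ) τ)
      (fun μ => deriv (fun s => Y τ s μ) σ) = 0) ∧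
  (∀ τ σ, etaForm p (fun μ => deriv (fun t => Y t σ μ) τ)
        (fun μ => deriv (fun t => Y t σ μ) τ)
      + etaForm p (fun μ => deriv (fun s => Y τ s μ) σ)
        (fun μ => deriv (fun s => Y τ s μ) σ) = 0)


lemma deriv_cos_mul (c k : ℝ) :
    deriv (fun t : ℝ => c * Real.cos (k * t)) = fun τ => -(c * k * Real.sin (k * τ)) := by
  funext τ
  have h1 : HasDerivAt (fun t : ℝ => k * t) k τ := by
    simpa using (hasDerivAt_id τ).const_mul k
  have h2 : HasDerivAt (fun t : ℝ => c * Real.cos (k * t)) (-(c * k * Real.sin (k * τ))) τ := by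
    have := ((Real.hasDerivAt_cos (k * τ)).comp τ h1).const_mul c
    exact this.congr_deriv (by ring)
  exact h2.deriv

lemma deriv_sin_mul (c k : ℝ) :
    deriv (fun t : ℝ => c * Real.sin (k * t)) = fun τ => c * k * Real.cos (k * τ) := by
  funext τ
  have h1 : HasDerivAt (fun t : ℝ => k * t) k τ := by
    simpa using (hasDerivAt_id τ).const_mul k
  have h2 : HasDerivAt (fun t : ℝ => c * Real.sin (k * t)) (c * k * Real.cos (k * τ)) τ := by
    have := ((Real.hasDerivAt_sin (k * τ)).comp τ h1).const_mul c
    exact this.congr_deriv (by ring)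
  exact h2.deriv

lemma deriv2_cos_mul (c k τ : ℝ) :
    deriv (fun t => deriv (fun t' : ℝ => c * Real.cos (k * t')) t) τ
      = -(c * k ^ 2 * Real.cos (k * τ)) := by
  simp only [deriv_cos_mul]
  have h1 : HasDerivAt (fun t : ℝ => k * t) k τ := by
    simpa using (hasDerivAt_id τ).const_mul k
  have h2 : HasDerivAt (fun t : ℝ => -(c * k * Real.sin (k * t))) (-(c * k ^ 2 * Real.cos (k * τ))) τ := by
    have := (((Real.hasDerivAt_sin (k * τ)).comp τ h1).const_mul (c * k)).neg
    exact this.congr_deriv (by ring)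
  exact h2.deriv

lemma deriv2_sin_mul (c k τ : ℝ) :
    deriv (fun t => deriv (fun t' : ℝ => c * Real.sin (k * t')) t) τ
      = -(c * k ^ 2 * Real.sin (k * τ)) := by
  simp only [deriv_sin_mul]
  have h1 : HasDerivAt (fun t : ℝ => k * t) k τ := by
    simpa using (hasDerivAt_id τ).const_mul k
  have h2 : HasDerivAt (fun t : ℝ => c * k * Real.cos (k * t)) (-(c * k ^ 2 * Real.sin (k * τ))) τ := by
    have := ((Real.hasDerivAt_cos (k * τ)).comp τ h1).const_mul (c * k)
    exact this.congr_deriv (by ring)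
  exact h2.deriv

section withrho
variable (ρ : ℝ → ℝ)

lemma deriv_cosh_comp (hρ1 : Differentiable ℝ ρ) (c d : ℝ) :
    deriv (fun s => c * Real.cosh (ρ s) * d)
      = fun σ => c * (Real.sinh (ρ σ) * deriv ρ σ) * d := by
  funext σ
  have h : HasDerivAt (fun s => c * Real.cosh (ρ s) * d)
      (c * (Real.sinh (ρ σ) * deriv ρ σ) * d) σ := by
    exact (((Real.hasDerivAt_cosh (ρ σ)).comp σ (hρ1 σ).hasDerivAt).const_mul c).mul_const d
  exact h.deriv

lemma deriv_sinh_comp (hρ1 : Differentiable ℝ ρ) (c d : ℝ) :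
    deriv (fun s => c * Real.sinh (ρ s) * d)
      = fun σ => c * (Real.cosh (ρ σ) * deriv ρ σ) * d := by
  funext σ
  have h : HasDerivAt (fun s => c * Real.sinh (ρ s) * d)
      (c * (Real.cosh (ρ σ) * deriv ρ σ) * d) σ := by
    exact (((Real.hasDerivAt_sinh (ρ σ)).comp σ (hρ1 σ).hasDerivAt).const_mul c).mul_const d
  exact h.deriv

lemma deriv2_cosh_comp (hρ1 : Differentiable ℝ ρ) (hρ2 : Differentiable ℝ (deriv ρ)) (c d σ : ℝ) :
    deriv (fun s => deriv (fun s' => c * Real.cosh (ρ s') * d) s) σ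
      = c * (Real.cosh (ρ σ) * (deriv ρ σ) ^ 2 + Real.sinh (ρ σ) * deriv (deriv ρ) σ) * d := by
  simp only [deriv_cosh_comp ρ hρ1]
  have h1 : HasDerivAt (fun s => Real.sinh (ρ s)) (Real.cosh (ρ σ) * deriv ρ σ) σ :=
    (Real.hasDerivAt_sinh (ρ σ)).comp σ (hρ1 σ).hasDerivAt
  have h : HasDerivAt (fun s => c * (Real.sinh (ρ s) * deriv ρ s) * d)
      (c * (Real.cosh (ρ σ) * (deriv ρ σ) ^ 2 + Real.sinh (ρ σ) * deriv (deriv ρ) σ) * d) σ := by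
    have := ((h1.mul (hρ2 σ).hasDerivAt).const_mul c).mul_const d
    exact this.congr_deriv (by ring)
  exact h.deriv

lemma deriv2_sinh_comp (hρ1 : Differentiable ℝ ρ) (hρ2 : Differentiable ℝ (deriv ρ)) (c d σ : ℝ) :
    deriv (fun s => deriv (fun s' => c * Real.sinh (ρ s') * d) s) σ
      = c * (Real.sinh (ρ σ) * (deriv ρ σ) ^ 2 + Real.cosh (ρ σ) * deriv (deriv ρ) σ) * d := by
  simp only [deriv_sinh_comp ρ hρ1]
  have h1 : HasDerivAt (fun s => Real.cosh (ρ s)) (Real.sinh (ρ σ) * deriv ρ σ) σ :=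
    (Real.hasDerivAt_cosh (ρ σ)).comp σ (hρ1 σ).hasDerivAt
  have h : HasDerivAt (fun s => c * (Real.cosh (ρ s) * deriv ρ s) * d)
      (c * (Real.sinh (ρ σ) * (deriv ρ σ) ^ 2 + Real.cosh (ρ σ) * deriv (deriv ρ) σ) * d) σ := by
    have := ((h1.mul (hρ2 σ).hasDerivAt).const_mul c).mul_const d
    exact this.congr_deriv (by ring)
  exact h.deriv

end withrho

/-- The rotating (GKP folded closed string) ansatz of the stringy membrane
solves the conformal-gauge string system on AdS₇ of radius ℓ = 2, with Λ = −2ρ'² and induced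
sphere multiplier Λ̃ = η(∂σY,∂σY) = 4ρ'². -/
theorem rotating_ansatz_is_conformal_string (ω κ : ℝ) (hω : 1 < ω) (hκ : 0 < κ)
    (ρ : ℝ → ℝ) (hρ1 : Differentiable ℝ ρ) (hρ2 : Differentiable ℝ (deriv ρ))
    (hEoM : ∀ σ, deriv (deriv ρ) σ
      = -κ ^ 2 * (ω ^ 2 - 1) * Real.sinh (ρ σ) * Real.cosh (ρ σ))
    (hVir : ∀ σ, (deriv ρ σ) ^ 2
      = κ ^ 2 * (Real.cosh (ρ σ) ^ 2 - ω ^ 2 * Real.sinh (ρ σ) ^ 2)) :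
    IsConformalString 5 2
      (fun τ σ =>
        ![2 * Real.cosh (ρ σ) * Real.cos (κ * τ),
          2 * Real.sinh (ρ σ) * Real.cos (κ * ω * τ),
          2 * Real.sinh (ρ σ) * Real.sin (κ * ω * τ),
          0, 0, 0, 0,
          2 * Real.cosh (ρ σ) * Real.sin (κ * τ)])
      (fun _ σ => -2 * (deriv ρ σ) ^ 2) ∧
    (∀ τ σ : ℝ,
      etaForm 5
        (fun μ => deriv (fun s =>
          (![2 * Real.cosh (ρ s) * Real.cos (κ * τ),
             2 * Real.sinh (ρ s) * Real.cos (κ * ω * τ),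
             2 * Real.sinh (ρ s) * Real.sin (κ * ω * τ),
             0, 0, 0, 0,
             2 * Real.cosh (ρ s) * Real.sin (κ * τ)] : Fin 8 → ℝ) μ) σ)
        (fun μ => deriv (fun s =>
          (![2 * Real.cosh (ρ s) * Real.cos (κ * τ),
             2 * Real.sinh (ρ s) * Real.cos (κ * ω * τ),
             2 * Real.sinh (ρ s) * Real.sin (κ * ω * τ),
             0, 0, 0, 0,
             2 * Real.cosh (ρ s) * Real.sin (κ * τ)] : Fin 8 → ℝ) μ) σ)
      = 4 * (deriv ρ σ) ^ 2) := by
  have hc := fun x : ℝ => Real.cosh_sq_sub_sinh_sq x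
  constructor
  · refine ⟨?_, ?_, ?_, ?_⟩
    · -- equations of motion
      intro τ σ μ
      fin_cases μ <;>
        simp only [Matrix.cons_val_zero, Matrix.cons_val_one, Matrix.head_cons,
          Matrix.cons_val_two, Matrix.tail_cons, Matrix.cons_val_three, Matrix.cons_val_four,
          Matrix.cons_val_succ, Matrix.cons_val_succ', Fin.zero_eta, Fin.mk_zero, Fin.mk_one,
          deriv_const, Fin.isValue,
          deriv2_cos_mul, deriv2_sin_mul, deriv2_cosh_comp ρ hρ1 hρ2,
          deriv2_sinh_comp ρ hρ1 hρ2, mul_zero, sub_zero, sub_self]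
      · linear_combination (2 * Real.cosh (ρ σ) * Real.cos (κ * τ)) * hVir σ
          - (2 * Real.sinh (ρ σ) * Real.cos (κ * τ)) * hEoM σ
          + (2 * κ ^ 2 * Real.cosh (ρ σ) * Real.cos (κ * τ)) * hc (ρ σ)
      · linear_combination (2 * Real.sinh (ρ σ) * Real.cos (κ * ω * τ)) * hVir σ
          - (2 * Real.cosh (ρ σ) * Real.cos (κ * ω * τ)) * hEoM σ
          + (2 * κ ^ 2 * ω ^ 2 * Real.sinh (ρ σ) * Real.cos (κ * ω * τ)) * hc (ρ σ)
      · linear_combination (2 * Real.sinh (ρ σ) * Real.sin (κ * ω * τ)) * hVir σ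
          - (2 * Real.cosh (ρ σ) * Real.sin (κ * ω * τ)) * hEoM σ
          + (2 * κ ^ 2 * ω ^ 2 * Real.sinh (ρ σ) * Real.sin (κ * ω * τ)) * hc (ρ σ)
      · linear_combination (2 * Real.cosh (ρ σ) * Real.sin (κ * τ)) * hVir σ
          - (2 * Real.sinh (ρ σ) * Real.sin (κ * τ)) * hEoM σ
          + (2 * κ ^ 2 * Real.cosh (ρ σ) * Real.sin (κ * τ)) * hc (ρ σ)
    · -- η(Y,Y) = -ℓ²
      intro τ σ
      simp only [etaForm, etaSign, Fin.sum_univ_succ, Fin.sum_univ_zero, Matrix.cons_val_zero,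
        Matrix.cons_val_succ, Fin.val_succ, Fin.val_zero]
      norm_num only
      simp only [true_or, or_true, or_self, or_false, false_or, if_true, if_false]
      linear_combination (-4 * Real.cosh (ρ σ) ^ 2) * Real.sin_sq_add_cos_sq (κ * τ)
        + (4 * Real.sinh (ρ σ) ^ 2) * Real.sin_sq_add_cos_sq (κ * ω * τ)
        - 4 * hc (ρ σ)
    · -- η(Y_τ, Y_σ) = 0
      intro τ σ
      simp only [etaForm, etaSign, Fin.sum_univ_succ, Fin.sum_univ_zero, Matrix.cons_val_zero,
        Matrix.cons_val_succ, Fin.val_succ, Fin.val_zero, deriv_const]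
      norm_num only
      simp only [deriv_cos_mul, deriv_sin_mul, deriv_cosh_comp ρ hρ1, deriv_sinh_comp ρ hρ1,
        true_or, or_true, or_self, or_false, false_or, if_true, if_false]
      ring
    · -- η(Y_τ,Y_τ) + η(Y_σ,Y_σ) = 0
      intro τ σ
      simp only [etaForm, etaSign, Fin.sum_univ_succ, Fin.sum_univ_zero, Matrix.cons_val_zero,
        Matrix.cons_val_succ, Fin.val_succ, Fin.val_zero, deriv_const]
      norm_num only
      simp only [deriv_cos_mul, deriv_sin_mul, deriv_cosh_comp ρ hρ1, deriv_sinh_comp ρ hρ1,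
        true_or, or_true, or_self, or_false, false_or, if_true, if_false]
      linear_combination
        (-4 * κ ^ 2 * Real.cosh (ρ σ) ^ 2 - 4 * (deriv ρ σ) ^ 2 * Real.sinh (ρ σ) ^ 2)
            * Real.sin_sq_add_cos_sq (κ * τ)
        + (4 * κ ^ 2 * ω ^ 2 * Real.sinh (ρ σ) ^ 2 + 4 * (deriv ρ σ) ^ 2 * Real.cosh (ρ σ) ^ 2)
            * Real.sin_sq_add_cos_sq (κ * ω * τ)
        + (4 * (Real.cosh (ρ σ) ^ 2 - Real.sinh (ρ σ) ^ 2)) * hVir σ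
        + (4 * κ ^ 2 * (Real.cosh (ρ σ) ^ 2 - ω ^ 2 * Real.sinh (ρ σ) ^ 2)) * hc (ρ σ)
  · -- Λ̃ = η(Y_σ, Y_σ) = 4 ρ'²
    intro τ σ
    simp only [etaForm, etaSign, Fin.sum_univ_succ, Fin.sum_univ_zero, Matrix.cons_val_zero,
      Matrix.cons_val_succ, Fin.val_succ, Fin.val_zero, deriv_const]
    norm_num only
    simp only [deriv_cosh_comp ρ hρ1, deriv_sinh_comp ρ hρ1, true_or, or_true, or_self,
      or_false, false_or, if_true, if_false]
    linear_combination (-4 * (deriv ρ σ) ^ 2 * Real.sinh (ρ σ) ^ 2) * Real.sin_sq_add_cos_sq (κ * τ)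
      + (4 * (deriv ρ σ) ^ 2 * Real.cosh (ρ σ) ^ 2) * Real.sin_sq_add_cos_sq (κ * ω * τ)
      + (4 * (deriv ρ σ) ^ 2) * hc (ρ σ)
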